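/- Suppose the d×d complex matrices A_0,...,A_{B−1} satisfy ‖A_b‖ ≤ r for all b (in some subordinate matrix norm), and let V be an eigenvector of Q = A_0 + ... + A_{B−1} with eigenvalue λ satisfying |λ| < r. Define Σ_K(x) = Σ_{|w|=K, .w ≤ x} A_w V for x ∈ [0,1]. Then sup_{x∈[0,1]} ‖Σ_K(x)‖ = O(r^K) as K → ∞. -/

import Mathlib

open Matrix

private lemma sum_words_prod {d B : ℕ} (A : Fin B → Matrix (Fin d) (Fin d) ℂ) :
    ∀ K : ℕ, ∑ w : Fin K → Fin B, (List.ofFn fun i => A (w i)).prod = (∑ b, A b) ^ K := by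
  intro K
  induction K with
  | zero => simp
  | succ K ih =>
    rw [← Equiv.sum_comp (Fin.consEquiv fun _ => Fin B)
        (fun w => (List.ofFn fun i => A (w i)).prod)]
    rw [Fintype.sum_prod_type]
    have h1 : ∀ (b : Fin B) (w : Fin K → Fin B),
        (List.ofFn fun i => A ((Fin.consEquiv fun _ => Fin B) (b, w) i)).prod
          = A b * (List.ofFn fun i => A (w i)).prod := by
      intro b w
      rw [List.ofFn_succ, List.prod_cons]
      simp [Fin.consEquiv]
    simp only [h1, ← Finset.mul_sum, ih, ← Finset.sum_mul, pow_succ']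

private lemma sum_mulVec' {d : ℕ} {ι : Type*} (s : Finset ι)
    (M : ι → Matrix (Fin d) (Fin d) ℂ) (v : Fin d → ℂ) :
    (∑ i ∈ s, M i) *ᵥ v = ∑ i ∈ s, M i *ᵥ v := by
  induction s using Finset.cons_induction with
  | empty => simp [Matrix.zero_mulVec]
  | cons a s ha ih => rw [Finset.sum_cons, Finset.sum_cons, Matrix.add_mulVec, ih]

private lemma mulVec_sum' {d : ℕ} {ι : Type*} (s : Finset ι)
    (M : Matrix (Fin d) (Fin d) ℂ) (f : ι → Fin d → ℂ) :
    M *ᵥ (∑ i ∈ s, f i) = ∑ i ∈ s, M *ᵥ f i := by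
  induction s using Finset.cons_induction with
  | empty => simp [Matrix.mulVec_zero]
  | cons a s ha ih => rw [Finset.sum_cons, Finset.sum_cons, Matrix.mulVec_add, ih]

private lemma digit_cons' {B K : ℕ} (hB : 0 < B) (b : Fin B) (w : Fin K → Fin B) :
    (∑ i : Fin (K + 1), (((Fin.cons (α := fun _ => Fin B) b w i) : ℕ) : ℝ) / (B : ℝ) ^ ((i : ℕ) + 1))
      = ((b : ℕ) : ℝ) / B + (∑ i : Fin K, ((w i : ℕ) : ℝ) / (B : ℝ) ^ ((i : ℕ) + 1)) / B := by
  have hB' : (B : ℝ) ≠ 0 := by positivity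
  rw [Fin.sum_univ_succ]
  simp only [Fin.cons_zero, Fin.cons_succ, Fin.val_succ]
  rw [Finset.sum_div]
  congr 1
  · norm_num
  · refine Finset.sum_congr rfl fun i _ => ?_
    rw [pow_succ]
    field_simp


/-- if `‖A_b‖ ≤ r` in the operator norm subordinate to the
Euclidean vector norm, and `V` is an eigenvector of `Q = ∑ A_b` for an
eigenvalue `λ` with `|λ| < r`, then `sup_{x∈[0,1]} ‖Σ_K(x)‖ = O(r^K)`. -/
theorem sigma_bigO
    (B d : ℕ) (hB : 2 ≤ B)
    (A : Fin B → Matrix (Fin d) (Fin d) ℂ) (r : ℝ)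
    (hA : ∀ b, ‖Matrix.toEuclideanCLM (𝕜 := ℂ) (A b)‖ ≤ r)
    (Q : Matrix (Fin d) (Fin d) ℂ) (hQ : Q = ∑ b : Fin B, A b)
    (V : Fin d → ℂ) (hV : V ≠ 0)
    (lam : ℂ) (heig : Q *ᵥ V = lam • V) (hlam : ‖lam‖ < r)
    (Sig : ℕ → ℝ → (Fin d → ℂ))
    (hSig : ∀ K x, Sig K x =
      ∑ w ∈ Finset.univ.filter
          (fun w : Fin K → Fin B =>
            (∑ i : Fin K, ((w i : ℕ) : ℝ) / (B : ℝ) ^ ((i : ℕ) + 1)) ≤ x),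
        ((List.ofFn fun i => A (w i)).prod) *ᵥ V) :
    ∃ c : ℝ, ∀ K : ℕ, ∀ x ∈ Set.Icc (0 : ℝ) 1,
      ‖(WithLp.equiv 2 (Fin d → ℂ)).symm (Sig K x)‖ ≤ c * r ^ K := by
  classical
  have hB0 : 0 < B := by omega
  have hBR : (0:ℝ) < B := by exact_mod_cast hB0
  set L := ‖lam‖ with hLdef
  have hL0 : 0 ≤ L := norm_nonneg lam
  have hr : 0 < r := lt_of_le_of_lt hL0 hlam
  set T := (WithLp.linearEquiv 2 ℂ (Fin d → ℂ)).symm with hTdef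
  -- operator norm bound
  have hop : ∀ (b : Fin B) (u : Fin d → ℂ), ‖T (A b *ᵥ u)‖ ≤ r * ‖T u‖ := by
    intro b u
    have key : T (A b *ᵥ u) = Matrix.toEuclideanCLM (𝕜 := ℂ) (A b) (T u) := rfl
    rw [key]
    calc ‖Matrix.toEuclideanCLM (𝕜 := ℂ) (A b) (T u)‖
        ≤ ‖Matrix.toEuclideanCLM (𝕜 := ℂ) (A b)‖ * ‖T u‖ :=
          ContinuousLinearMap.le_opNorm _ _
      _ ≤ r * ‖T u‖ := mul_le_mul_of_nonneg_right (hA b) (norm_nonneg _)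
  -- eigenvalue powers
  have hQV : ∀ K : ℕ, Q ^ K *ᵥ V = lam ^ K • V := by
    intro K
    induction K with
    | zero => simp [Matrix.one_mulVec]
    | succ K ih =>
      rw [pow_succ', ← Matrix.mulVec_mulVec, ih, Matrix.mulVec_smul, heig, smul_smul,
        ← pow_succ]
  -- digit sums in [0,1]
  have hnn : ∀ (K : ℕ) (w : Fin K → Fin B),
      0 ≤ ∑ i : Fin K, ((w i : ℕ) : ℝ) / (B : ℝ) ^ ((i : ℕ) + 1) := by
    intro K w; positivity
  have hle1 : ∀ (K : ℕ) (w : Fin K → Fin B),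
      (∑ i : Fin K, ((w i : ℕ) : ℝ) / (B : ℝ) ^ ((i : ℕ) + 1)) ≤ 1 := by
    intro K
    induction K with
    | zero => intro w; simp
    | succ K ih =>
      intro w
      have hw : ∀ i, w i = Fin.cons (α := fun _ => Fin B) (w 0) (fun i => w i.succ) i := by
        intro i; induction i using Fin.cases <;> simp
      rw [Finset.sum_congr rfl fun i _ => by rw [hw i]]
      rw [digit_cons' hB0]
      have h1 : ((w 0 : ℕ) : ℝ) ≤ (B : ℝ) - 1 := by
        have h := (w 0).isLt
        have : ((w 0 : ℕ) : ℝ) + 1 ≤ (B : ℝ) := by exact_mod_cast h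
        linarith
      have h2 := ih (fun i => w i.succ)
      rw [← add_div, div_le_one hBR]
      linarith
  -- Sig at y ≥ 1 and y < 0
  have hfull : ∀ (K : ℕ) (y : ℝ), 1 ≤ y → Sig K y = lam ^ K • V := by
    intro K y hy
    rw [hSig K y, Finset.filter_true_of_mem (fun w _ => le_trans (hle1 K w) hy),
      ← sum_mulVec', sum_words_prod, ← hQ, hQV]
  have hnegs : ∀ (K : ℕ) (y : ℝ), y < 0 → Sig K y = 0 := by
    intro K y hy
    rw [hSig K y, Finset.filter_false_of_mem, Finset.sum_empty]
    intro w _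
    exact not_le.mpr (lt_of_lt_of_le hy (hnn K w))
  -- recursion
  have hrec : ∀ (K : ℕ) (x : ℝ), Sig (K + 1) x = ∑ b : Fin B, A b *ᵥ Sig K ((B : ℝ) * x - b) := by
    intro K x
    rw [hSig (K + 1) x, Finset.sum_filter]
    rw [← Equiv.sum_comp (Fin.consEquiv fun _ => Fin B)]
    rw [Fintype.sum_prod_type]
    refine Finset.sum_congr rfl fun b _ => ?_
    rw [hSig K ((B : ℝ) * x - b), mulVec_sum', Finset.sum_filter]
    refine Finset.sum_congr rfl fun w _ => ?_
    have hc : ∀ i, ((Fin.consEquiv fun _ => Fin B) (b, w)) i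
        = Fin.cons (α := fun _ => Fin B) b w i := fun i => rfl
    have hcond : ((∑ i : Fin (K+1),
          ((((Fin.consEquiv fun _ => Fin B) (b, w)) i : ℕ) : ℝ) / (B : ℝ) ^ ((i : ℕ) + 1)) ≤ x)
        ↔ ((∑ i : Fin K, ((w i : ℕ) : ℝ) / (B : ℝ) ^ ((i : ℕ) + 1)) ≤ (B : ℝ) * x - b) := by
      rw [Finset.sum_congr rfl fun i _ => by rw [hc i]]
      rw [digit_cons' hB0, ← add_div, div_le_iff₀ hBR]
      constructor <;> intro h <;> nlinarith
    have hval : (List.ofFn fun i => A (((Fin.consEquiv fun _ => Fin B) (b, w)) i)).prod *ᵥ V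
        = A b *ᵥ ((List.ofFn fun i => A (w i)).prod *ᵥ V) := by
      rw [List.ofFn_succ, List.prod_cons]
      simp only [hc, Fin.cons_zero, Fin.cons_succ]
      rw [Matrix.mulVec_mulVec]
    rw [if_congr hcond hval rfl]
  -- the inductive bound
  set nV := ‖T V‖ with hnV
  set g : ℕ → ℝ := fun K => nV * (r ^ K + B * ∑ j ∈ Finset.range K, r ^ (K - j) * L ^ j)
    with hgdef
  have hgnn : ∀ K, 0 ≤ g K := by
    intro K
    have h1 : 0 ≤ ∑ j ∈ Finset.range K, r ^ (K - j) * L ^ j := by positivity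
    have h2 : (0:ℝ) ≤ nV := norm_nonneg _
    have : (0:ℝ) ≤ r ^ K := by positivity
    rw [hgdef]
    positivity
  have hbound : ∀ (K : ℕ) (y : ℝ), ‖T (Sig K y)‖ ≤ g K := by
    intro K
    induction K with
    | zero =>
      intro y
      rcases lt_or_ge y 0 with hy | hy
      · rw [hnegs 0 y hy, map_zero, norm_zero]
        exact hgnn 0
      · have hS : Sig 0 y = V := by
          rw [hSig 0 y, Finset.filter_true_of_mem (fun w _ => by simpa using hy),
            ← sum_mulVec', sum_words_prod, pow_zero, Matrix.one_mulVec]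
        rw [hS]
        simp [hgdef]
        exact le_rfl
    | succ K ih =>
      intro y
      rw [hrec K y, map_sum]
      refine le_trans (norm_sum_le _ _) ?_
      set m : ℤ := ⌊(B : ℝ) * y⌋ with hm
      have hterm : ∀ b : Fin B, ‖T (A b *ᵥ Sig K ((B : ℝ) * y - b))‖ ≤
          r * (L ^ K * nV) + (if ((b : ℤ) = m) then r * g K else 0) := by
        intro b
        have hApos : (0:ℝ) ≤ r * (L ^ K * nV) := by positivity
        have hite : (0:ℝ) ≤ (if ((b : ℤ) = m) then r * g K else 0) := by
          split
          · exact mul_nonneg hr.le (hgnn K)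
          · exact le_rfl
        rcases lt_or_ge ((B : ℝ) * y - b) 0 with h0 | h0
        · rw [hnegs K _ h0, Matrix.mulVec_zero, map_zero, norm_zero]
          linarith
        rcases lt_or_ge ((B : ℝ) * y - b) 1 with h1 | h1
        · have hfl : (b : ℤ) = m := by
            rw [hm]
            symm
            rw [Int.floor_eq_iff]
            constructor
            · push_cast; linarith
            · push_cast; linarith
          rw [if_pos hfl]
          have := hop b (Sig K ((B : ℝ) * y - b))
          have h2 : r * ‖T (Sig K ((B : ℝ) * y - b))‖ ≤ r * g K :=
            mul_le_mul_of_nonneg_left (ih _) hr.le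
          linarith
        · rw [hfull K _ h1]
          have := hop b (lam ^ K • V)
          have hLV : ‖T (lam ^ K • V)‖ = L ^ K * nV := by
            rw [_root_.map_smul, norm_smul, norm_pow, hnV]
          rw [hLV] at this
          calc ‖T (A b *ᵥ (lam ^ K • V))‖ ≤ r * (L ^ K * nV) := this
            _ ≤ _ := le_add_of_nonneg_right hite
      calc (∑ b : Fin B, ‖T (A b *ᵥ Sig K ((B : ℝ) * y - b))‖)
          ≤ ∑ b : Fin B, (r * (L ^ K * nV) + (if ((b : ℤ) = m) then r * g K else 0)) :=
            Finset.sum_le_sum fun b _ => hterm b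
        _ = (B : ℝ) * (r * (L ^ K * nV)) +
            (∑ b : Fin B, if ((b : ℤ) = m) then r * g K else 0) := by
            rw [Finset.sum_add_distrib, Finset.sum_const, Finset.card_univ, Fintype.card_fin,
              nsmul_eq_mul]
        _ ≤ (B : ℝ) * (r * (L ^ K * nV)) + r * g K := by
            have hsum : (∑ b : Fin B, if ((b : ℤ) = m) then r * g K else 0) ≤ r * g K := by
              by_cases hex : ∃ b0 : Fin B, ((b0 : ℤ) = m)
              · obtain ⟨b0, hb0⟩ := hex
                have heq : ∀ b : Fin B, ((b : ℤ) = m) ↔ b = b0 := by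
                  intro b
                  constructor
                  · intro h
                    apply Fin.ext
                    exact_mod_cast h.trans hb0.symm
                  · rintro rfl; exact hb0
                rw [Finset.sum_congr rfl fun b _ => if_congr (heq b) rfl rfl,
                  Finset.sum_ite_eq' Finset.univ b0]
                simp
              · push_neg at hex
                have : ∀ b : Fin B, ((b : ℤ) ≠ m) := hex
                simp only [this, if_false, Finset.sum_const_zero]
                exact mul_nonneg hr.le (hgnn K)
            linarith
        _ ≤ g (K + 1) := by
            have hstep : g (K + 1) = (B:ℝ) * (r * (L ^ K * nV)) + r * g K := by
              rw [hgdef]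
              simp only []
              rw [Finset.sum_range_succ]
              have hc : ∀ j ∈ Finset.range K, r ^ (K + 1 - j) * L ^ j
                  = r * (r ^ (K - j) * L ^ j) := by
                intro j hj
                rw [Finset.mem_range] at hj
                rw [show K + 1 - j = (K - j) + 1 by omega, pow_succ']
                ring
              rw [Finset.sum_congr rfl hc, ← Finset.mul_sum,
                show K + 1 - K = 1 by omega, pow_one]
              ring
            rw [hstep]
  -- conclude
  set q : ℝ := L / r with hq
  have hq0 : 0 ≤ q := div_nonneg hL0 hr.le
  have hq1 : q < 1 := (div_lt_one hr).mpr hlam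
  refine ⟨nV * (1 + B * (1 / (1 - q))), ?_⟩
  intro K x hx
  have hgK : g K ≤ nV * (1 + B * (1 / (1 - q))) * r ^ K := by
    have hsum : (∑ j ∈ Finset.range K, r ^ (K - j) * L ^ j) ≤ r ^ K * (1 / (1 - q)) := by
      have hterm : ∀ j ∈ Finset.range K, r ^ (K - j) * L ^ j = r ^ K * q ^ j := by
        intro j hj
        rw [Finset.mem_range] at hj
        have hLrq : L = r * q := by rw [hq, mul_div_cancel₀ L hr.ne']
        rw [hLrq, mul_pow, ← mul_assoc, ← pow_add, show K - j + j = K by omega]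
      rw [Finset.sum_congr rfl hterm, ← Finset.mul_sum]
      have hgs : (∑ j ∈ Finset.range K, q ^ j) ≤ 1 / (1 - q) := by
        have h1q : 0 < 1 - q := by linarith
        rw [le_div_iff₀ h1q]
        have hid := geom_sum_mul q K
        have hqK : (0:ℝ) ≤ q ^ K := by positivity
        have hSid : (∑ j ∈ Finset.range K, q ^ j) * (1 - q) = 1 - q ^ K := by
          linear_combination -hid
        linarith
      exact mul_le_mul_of_nonneg_left hgs (by positivity)
    rw [hgdef]
    simp only []
    have hBn : (0:ℝ) ≤ B := hBR.le
    have h2 : (0:ℝ) ≤ nV := norm_nonneg _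
    have h3 := mul_le_mul_of_nonneg_left hsum (mul_nonneg h2 hBn)
    nlinarith [h3]
  exact le_trans (hbound K x) hgK
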